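/- arXiv:2512.22663 — 2 statements merged into one kernel-verified Lean document; each statement's English description precedes it below -/
import Mathlib

section
/- Let (X, f_{1,∞}) be a periodic non-autonomous system on a compact Hausdorff uniform space (X, 𝒰) whose induced autonomous map g has a transitive point. Then (X, f_{1,∞}) is thickly sensitive if and only if it is multi-sensitive. -/
open Topology Filter Set
open scoped Uniformity

/-- `traj f n = f_n ∘ ⋯ ∘ f_1` (and `traj f 0 = id`), i.e. `f_1^n`. -/
def traj {X : Type*} (f : ℕ → X → X) : ℕ → X → X
  | 0 => id
  | n + 1 => f (n + 1) ∘ traj f n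

/-- The family `f` is periodic with period `p`. -/
def PeriodicFam {X : Type*} (f : ℕ → X → X) (p : ℕ) : Prop :=
  ∀ n, f (n + p) = f n

/-- A set of naturals is thick: it contains arbitrarily long blocks of consecutive integers. -/
def Thick (T : Set ℕ) : Prop :=
  ∀ k : ℕ, ∃ n : ℕ, ∀ i ≤ k, n + i ∈ T

/-- A set of naturals is syndetic: it has bounded gaps. -/
def Syndetic (S : Set ℕ) : Prop :=
  ∃ M : ℕ, ∀ n : ℕ, ∃ m ∈ S, n ≤ m ∧ m ≤ n + M

/-- `x` is a transitive point of the non-autonomous system `(X, f_{1,∞})`. -/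
def TransPt {X : Type*} [TopologicalSpace X] (f : ℕ → X → X) (x : X) : Prop :=
  Dense (Set.range fun n => traj f n x)

/-- `x` is a transitive point of the autonomous system `(X, g)`. -/
def TransPtAut {X : Type*} [TopologicalSpace X] (g : X → X) (x : X) : Prop :=
  Dense (Set.range fun n => g^[n] x)

/-- `x` is an equicontinuity point of `(X, f_{1,∞})` on a uniform space. -/
def EqPt {X : Type*} [UniformSpace X] (f : ℕ → X → X) (x : X) : Prop :=
  ∀ E ∈ 𝓤 X, ∃ D ∈ 𝓤 X, ∀ y : X, (x, y) ∈ D → ∀ n : ℕ, (traj f n x, traj f n y) ∈ E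

/-- `x` is a syndetically equicontinuous point of `(X, f_{1,∞})`. -/
def SynEqPt {X : Type*} [UniformSpace X] (f : ℕ → X → X) (x : X) : Prop :=
  ∀ E ∈ 𝓤 X, ∃ U ∈ 𝓝 x,
    Syndetic {n : ℕ | ∀ x₁ ∈ U, ∀ x₂ ∈ U, (traj f n x₁, traj f n x₂) ∈ E}

/-- `x` is a syndetically equicontinuous point of the autonomous system `(X, g)`. -/
def SynEqPtAut {X : Type*} [UniformSpace X] (g : X → X) (x : X) : Prop :=
  ∀ E ∈ 𝓤 X, ∃ U ∈ 𝓝 x,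
    Syndetic {n : ℕ | ∀ x₁ ∈ U, ∀ x₂ ∈ U, (g^[n] x₁, g^[n] x₂) ∈ E}

/-- `N(U, D)` for the non-autonomous system. -/
def NSet {X : Type*} (f : ℕ → X → X) (U : Set X) (D : Set (X × X)) : Set ℕ :=
  {n : ℕ | 0 < n ∧ ∃ x ∈ U, ∃ y ∈ U, (traj f n x, traj f n y) ∉ D}

/-- `N(U, D)` for the autonomous system. -/
def NSetAut {X : Type*} (g : X → X) (U : Set X) (D : Set (X × X)) : Set ℕ :=
  {n : ℕ | 0 < n ∧ ∃ x ∈ U, ∃ y ∈ U, (g^[n] x, g^[n] y) ∉ D}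

/-- Sensitivity of `(X, f_{1,∞})`. -/
def Sensitive {X : Type*} [UniformSpace X] (f : ℕ → X → X) : Prop :=
  ∃ D ∈ 𝓤 X, ∀ U : Set X, IsOpen U → U.Nonempty → (NSet f U D).Nonempty

/-- Thick sensitivity of `(X, f_{1,∞})`. -/
def ThickSensitive {X : Type*} [UniformSpace X] (f : ℕ → X → X) : Prop :=
  ∃ D ∈ 𝓤 X, ∀ U : Set X, IsOpen U → U.Nonempty → Thick (NSet f U D)

/-- Thick sensitivity of the autonomous system `(X, g)`. -/
def ThickSensitiveAut {X : Type*} [UniformSpace X] (g : X → X) : Prop :=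
  ∃ D ∈ 𝓤 X, ∀ U : Set X, IsOpen U → U.Nonempty → Thick (NSetAut g U D)

/-- Multi-sensitivity of `(X, f_{1,∞})`. -/
def MultiSensitive {X : Type*} [UniformSpace X] (f : ℕ → X → X) : Prop :=
  ∃ D ∈ 𝓤 X, ∀ (k : ℕ) (U : Fin (k + 1) → Set X),
    (∀ i, IsOpen (U i)) → (∀ i, (U i).Nonempty) → (⋂ i, NSet f (U i) D).Nonempty

/-- Multi-sensitivity of the autonomous system `(X, g)`. -/
def MultiSensitiveAut {X : Type*} [UniformSpace X] (g : X → X) : Prop :=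
  ∃ D ∈ 𝓤 X, ∀ (k : ℕ) (U : Fin (k + 1) → Set X),
    (∀ i, IsOpen (U i)) → (∀ i, (U i).Nonempty) → (⋂ i, NSetAut g (U i) D).Nonempty

/-- Eventual sensitivity of `(X, f_{1,∞})` with a given entourage `D`. -/
def EvSensitiveWith {X : Type*} [UniformSpace X] (f : ℕ → X → X) (D : Set (X × X)) : Prop :=
  ∀ x : X, ∀ E ∈ 𝓤 X, ∃ n k : ℕ, 0 < n ∧ 0 < k ∧
    ∃ y : X, (traj f n x, y) ∈ E ∧ (traj f (n + k) x, traj f k y) ∉ D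

/-- Eventual sensitivity of `(X, f_{1,∞})`. -/
def EvSensitive {X : Type*} [UniformSpace X] (f : ℕ → X → X) : Prop :=
  ∃ D ∈ 𝓤 X, EvSensitiveWith f D

/-- Eventual sensitivity of the autonomous system `(X, g)` with entourage `D`. -/
def EvSensitiveAutWith {X : Type*} [UniformSpace X] (g : X → X) (D : Set (X × X)) : Prop :=
  ∀ x : X, ∀ E ∈ 𝓤 X, ∃ q k : ℕ, 0 < q ∧ 0 < k ∧
    ∃ y : X, (g^[q] x, y) ∈ E ∧ (g^[q + k] x, g^[k] y) ∉ D

/-- `(x, y)` is a (topological) equicontinuity pair for `(X, f_{1,∞})`. -/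
def EqPair {X : Type*} [TopologicalSpace X] (f : ℕ → X → X) (x y : X) : Prop :=
  ∀ O ∈ 𝓝 y, ∃ U ∈ 𝓝 x, ∃ V ∈ 𝓝 y, ∀ n : ℕ, 0 < n →
    ((traj f n '' U) ∩ V).Nonempty → traj f n '' U ⊆ O

/-- `(x, y)` is a syndetic equicontinuity pair for `(X, f_{1,∞})`. -/
def SynEqPair {X : Type*} [TopologicalSpace X] (f : ℕ → X → X) (x y : X) : Prop :=
  ∀ O ∈ 𝓝 y, ∃ U ∈ 𝓝 x, ∃ V ∈ 𝓝 y,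
    Syndetic {n : ℕ | ((traj f n '' U) ∩ V).Nonempty → traj f n '' U ⊆ O}

/-- `O` is a splitting neighborhood of `y` with respect to `x`. -/
def SplittingNbhd {X : Type*} [TopologicalSpace X] (f : ℕ → X → X) (x y : X) (O : Set X) :
    Prop :=
  O ∈ 𝓝 y ∧ ∀ U ∈ 𝓝 x, ∀ V ∈ 𝓝 y, ∃ n : ℕ, 0 < n ∧
    ((traj f n '' U) ∩ V).Nonempty ∧ ¬ traj f n '' U ⊆ O

/-- A finite open cover of `X`. -/
def IsFinOpenCover {X : Type*} [TopologicalSpace X] (𝒰 : Finset (Set X)) : Prop :=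
  (∀ U ∈ 𝒰, IsOpen U) ∧ ⋃₀ (↑𝒰 : Set (Set X)) = Set.univ

/-- `N(V, 𝒰)`: times at which `f_1^n(V)` is not contained in any single member of `𝒰`. -/
def HNSet {X : Type*} (f : ℕ → X → X) (V : Set X) (𝒰 : Finset (Set X)) : Set ℕ :=
  {n : ℕ | 0 < n ∧ ∀ U ∈ 𝒰, ¬ traj f n '' V ⊆ U}

/-- `N(V, 𝒰)` for the autonomous system. -/
def HNSetAut {X : Type*} (g : X → X) (V : Set X) (𝒰 : Finset (Set X)) : Set ℕ :=
  {n : ℕ | 0 < n ∧ ∀ U ∈ 𝒰, ¬ g^[n] '' V ⊆ U}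

/-- Hausdorff sensitivity of `(X, f_{1,∞})`. -/
def HSensitive {X : Type*} [TopologicalSpace X] (f : ℕ → X → X) : Prop :=
  ∃ 𝒰 : Finset (Set X), IsFinOpenCover 𝒰 ∧
    ∀ V : Set X, IsOpen V → V.Nonempty → (HNSet f V 𝒰).Nonempty

/-- Hausdorff sensitivity of the autonomous system `(X, g)`. -/
def HSensitiveAut {X : Type*} [TopologicalSpace X] (g : X → X) : Prop :=
  ∃ 𝒰 : Finset (Set X), IsFinOpenCover 𝒰 ∧
    ∀ V : Set X, IsOpen V → V.Nonempty → (HNSetAut g V 𝒰).Nonempty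

/-- Thick Hausdorff sensitivity of `(X, f_{1,∞})`. -/
def ThickHSensitive {X : Type*} [TopologicalSpace X] (f : ℕ → X → X) : Prop :=
  ∃ 𝒰 : Finset (Set X), IsFinOpenCover 𝒰 ∧
    ∀ V : Set X, IsOpen V → V.Nonempty → Thick (HNSet f V 𝒰)

/-- Thick Hausdorff sensitivity of the autonomous system `(X, g)`. -/
def ThickHSensitiveAut {X : Type*} [TopologicalSpace X] (g : X → X) : Prop :=
  ∃ 𝒰 : Finset (Set X), IsFinOpenCover 𝒰 ∧
    ∀ V : Set X, IsOpen V → V.Nonempty → Thick (HNSetAut g V 𝒰)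

/-- Multi-Hausdorff sensitivity of the autonomous system `(X, g)`. -/
def MultiHSensitiveAut {X : Type*} [TopologicalSpace X] (g : X → X) : Prop :=
  ∃ 𝒰 : Finset (Set X), IsFinOpenCover 𝒰 ∧
    ∀ (m : ℕ) (V : Fin (m + 1) → Set X),
      (∀ i, IsOpen (V i)) → (∀ i, (V i).Nonempty) → (⋂ i, HNSetAut g (V i) 𝒰).Nonempty

section Aux
variable {X : Type*}

theorem traj_succ' (f : ℕ → X → X) (n : ℕ) : traj f (n + 1) = f (n + 1) ∘ traj f n := rfl

theorem traj_cont [TopologicalSpace X] (f : ℕ → X → X) (hf : ∀ n, Continuous (f n)) :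
    ∀ n, Continuous (traj f n)
  | 0 => continuous_id
  | n + 1 => (hf (n + 1)).comp (traj_cont f hf n)

theorem traj_congr (F G : ℕ → X → X) (h : ∀ i, F i = G i) : ∀ n, traj F n = traj G n
  | 0 => rfl
  | n + 1 => by
      show F (n+1) ∘ traj F n = G (n+1) ∘ traj G n
      rw [h (n+1), traj_congr F G h n]

theorem traj_add_p (f : ℕ → X → X) {p : ℕ} (hper : PeriodicFam f p) :
    ∀ n, traj f (n + p) = traj f n ∘ traj f p := by
  intro n
  induction n with
  | zero => simp [traj]
  | succ n ih =>
      have h1 : n + 1 + p = (n + p) + 1 := by omega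
      have h2 : f (n + p + 1) = f (n + 1) := by
        rw [show n + p + 1 = (n + 1) + p by omega, hper]
      rw [h1, traj_succ', ih, h2]
      rfl

theorem traj_add_mul (f : ℕ → X → X) {p : ℕ} (hper : PeriodicFam f p) :
    ∀ (a n : ℕ), traj f (n + a * p) = traj f n ∘ (traj f p)^[a] := by
  intro a
  induction a with
  | zero => intro n; simp
  | succ a ih =>
      intro n
      have h1 : n + (a + 1) * p = (n + p) + a * p := by ring
      rw [h1, ih (n + p), traj_add_p f hper n, Function.iterate_succ']
      rfl

/-- segment map: `seg f s r = f (s+r) ∘ ⋯ ∘ f (s+1)`. -/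
def seg (f : ℕ → X → X) (s : ℕ) : ℕ → X → X := traj (fun i => f (s + i))

theorem seg_spec (f : ℕ → X → X) (s : ℕ) : ∀ r, traj f (s + r) = seg f s r ∘ traj f s := by
  intro r
  induction r with
  | zero => rfl
  | succ r ih =>
      show f (s + r + 1) ∘ traj f (s + r) = (f (s + (r + 1)) ∘ seg f s r) ∘ traj f s
      rw [ih]
      rfl

theorem seg_add_p (f : ℕ → X → X) {p : ℕ} (hper : PeriodicFam f p) (s r : ℕ) :
    seg f (s + p) r = seg f s r := by
  apply traj_congr
  intro i
  show f (s + p + i) = f (s + i)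
  rw [show s + p + i = (s + i) + p by omega, hper]

theorem seg_add_mul (f : ℕ → X → X) {p : ℕ} (hper : PeriodicFam f p) :
    ∀ (a s r : ℕ), seg f (s + a * p) r = seg f s r := by
  intro a
  induction a with
  | zero => intro s r; simp
  | succ a ih =>
      intro s r
      rw [show s + (a + 1) * p = (s + a * p) + p by ring, seg_add_p f hper, ih]

theorem seg_mod (f : ℕ → X → X) {p : ℕ} (hper : PeriodicFam f p) (s r : ℕ) :
    seg f (s % p) r = seg f s r := by
  conv_rhs => rw [show s = s % p + (s / p) * p from by rw [Nat.mod_add_div']]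
  rw [seg_add_mul f hper]

theorem ucPack [UniformSpace X] [CompactSpace X] {ι : Type} [Finite ι]
    (h : ι → X → X) (hc : ∀ i, Continuous (h i)) {D : Set (X × X)} (hD : D ∈ 𝓤 X) :
    ∃ E ∈ 𝓤 X, ∀ i u v, (u, v) ∈ E → (h i u, h i v) ∈ D := by
  have key : ∀ i, {q : X × X | (h i q.1, h i q.2) ∈ D} ∈ 𝓤 X := by
    intro i
    have huc : UniformContinuous (h i) := CompactSpace.uniformContinuous_of_continuous (hc i)
    exact mem_map.mp (huc hD)
  refine ⟨⋂ i, {q : X × X | (h i q.1, h i q.2) ∈ D}, Filter.iInter_mem.mpr key, ?_⟩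
  intro i u v hu
  exact Set.mem_iInter.mp hu i

end Aux


theorem multi_surj {X : Type*} [UniformSpace X] [CompactSpace X] [T2Space X]
    {f : ℕ → X → X} (hf : ∀ n, Continuous (f n)) {p : ℕ}
    (hmulti : MultiSensitive f) {x : X} (htrans : TransPtAut (traj f p) x) :
    Function.Surjective (traj f p) := by
  by_contra hsurj
  rw [← Set.range_eq_univ] at hsurj
  have hgc : Continuous (traj f p) := traj_cont f hf p
  have hclosed : IsClosed (Set.range (traj f p)) := (isCompact_range hgc).isClosed
  have hWopen : IsOpen ((Set.range (traj f p))ᶜ) := hclosed.isOpen_compl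
  have hne : ((Set.range (traj f p))ᶜ).Nonempty := by
    rw [Set.nonempty_compl]; exact fun h => hsurj (by rw [h])
  -- every element of the complement equals x
  have hsub : (Set.range (traj f p))ᶜ ⊆ {x} := by
    intro w hw
    by_contra hwx
    have hO : IsOpen ((Set.range (traj f p))ᶜ \ {x}) := hWopen.sdiff isClosed_singleton
    have hne' : ((Set.range (traj f p))ᶜ \ {x}).Nonempty := ⟨w, hw, by simpa using hwx⟩
    obtain ⟨z, hz1, hz2⟩ := htrans.inter_open_nonempty _ hO hne'
    obtain ⟨n, rfl⟩ := hz2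
    rcases n with _ | n
    · exact hz1.2 (by simp)
    · exact hz1.1 ⟨(traj f p)^[n] x, (Function.iterate_succ_apply' _ _ _).symm⟩
  have hWeq : (Set.range (traj f p))ᶜ = {x} := by
    obtain ⟨y, hy⟩ := hne
    have hyx : y = x := hsub hy
    subst hyx
    exact Set.Subset.antisymm hsub (by intro t ht; rw [Set.mem_singleton_iff] at ht; subst ht; exact hy)
  have hxopen : IsOpen ({x} : Set X) := hWeq ▸ hWopen
  obtain ⟨Dm, hDm, hM⟩ := hmulti
  obtain ⟨n, hn⟩ := hM 0 (fun _ => {x}) (fun _ => hxopen) (fun _ => ⟨x, rfl⟩)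
  obtain ⟨hn0, a, ha, b, hb, hsep⟩ := Set.mem_iInter.mp hn 0
  rw [Set.mem_singleton_iff] at ha hb
  subst ha; subst hb
  exact hsep (refl_mem_uniformity hDm)

theorem thickSensitive_iff_multiSensitive {X : Type*} [UniformSpace X] [CompactSpace X]
    [T2Space X]
    (f : ℕ → X → X) (hf : ∀ n, Continuous (f n))
    (p : ℕ) (hp : 0 < p) (hper : PeriodicFam f p)
    (htrans : ∃ x, TransPtAut (traj f p) x) :
    ThickSensitive f ↔ MultiSensitive f := by
  obtain ⟨x, hx⟩ := htrans
  constructor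
  · -- Thick ⇒ Multi
    rintro ⟨D, hD, hth⟩
    refine ⟨D, hD, ?_⟩
    intro k U hUo hUne
    have hm : ∀ i : Fin (k + 1), ∃ m : ℕ, (traj f p)^[m] x ∈ U i := by
      intro i
      obtain ⟨z, hz1, hz2⟩ := hx.inter_open_nonempty (U i) (hUo i) (hUne i)
      obtain ⟨m, rfl⟩ := hz2
      exact ⟨m, hz1⟩
    choose m hmem using hm
    have hWo : IsOpen (⋂ i, ((traj f p)^[m i]) ⁻¹' (U i)) :=
      isOpen_iInter_of_finite fun i => (hUo i).preimage ((traj_cont f hf p).iterate _)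
    have hxW : x ∈ ⋂ i, ((traj f p)^[m i]) ⁻¹' (U i) :=
      Set.mem_iInter.mpr fun i => hmem i
    obtain ⟨n₀, hn₀⟩ := hth _ hWo ⟨x, hxW⟩ (Finset.univ.sup m * p)
    have hpos : 0 < n₀ := by simpa using (hn₀ 0 (Nat.zero_le _)).1
    refine ⟨n₀, Set.mem_iInter.mpr fun i => ?_⟩
    have hle : m i * p ≤ Finset.univ.sup m * p :=
      Nat.mul_le_mul_right p (Finset.le_sup (Finset.mem_univ i))
    obtain ⟨hpos', u, hu, v, hv, hsep⟩ := hn₀ (m i * p) hle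
    refine ⟨hpos, (traj f p)^[m i] u, Set.mem_iInter.mp hu i,
      (traj f p)^[m i] v, Set.mem_iInter.mp hv i, ?_⟩
    intro hcon
    apply hsep
    rw [traj_add_mul f hper (m i) n₀]
    exact hcon
  · -- Multi ⇒ Thick
    intro hmulti
    obtain ⟨Dm, hDm, hM⟩ := hmulti
    have hsurj : Function.Surjective (traj f p) := multi_surj hf ⟨Dm, hDm, hM⟩ hx
    obtain ⟨D₂, hD₂, hD₂s, hD₂c⟩ := comp_symm_mem_uniformity_sets hDm
    obtain ⟨D', hD'u, hD'⟩ := ucPack (ι := Fin p × Fin (p + 1))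
      (fun q => seg f (q.1 : ℕ) (q.2 : ℕ))
      (fun q => traj_cont _ (fun n => hf _) _) hDm
    refine ⟨D', hD'u, ?_⟩
    intro U hUo hUne k
    obtain ⟨z, hz⟩ := hUne
    -- small set V around z
    obtain ⟨E, hEu, hE⟩ := ucPack (ι := Fin (k * p + 1)) (fun j => traj f (j : ℕ))
      (fun j => traj_cont f hf _) hD₂
    obtain ⟨E₃, ⟨hE₃u, hE₃o⟩, hE₃sub⟩ := uniformity_hasBasis_open.mem_iff.mp hEu
    have hVo : IsOpen {w | (z, w) ∈ E₃} :=
      hE₃o.preimage (continuous_const.prodMk continuous_id)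
    have hzV : z ∈ {w | (z, w) ∈ E₃} := refl_mem_uniformity hE₃u
    have hVpair : ∀ u ∈ {w | (z, w) ∈ E₃}, ∀ v ∈ {w | (z, w) ∈ E₃},
        ∀ j : ℕ, j ≤ k * p → (traj f j u, traj f j v) ∈ Dm := by
      intro u hu v hv j hj
      have h1 : (traj f j z, traj f j u) ∈ D₂ := hE ⟨j, by omega⟩ z u (hE₃sub hu)
      have h2 : (traj f j z, traj f j v) ∈ D₂ := hE ⟨j, by omega⟩ z v (hE₃sub hv)
      have h1' : (traj f j u, traj f j z) ∈ D₂ := hD₂s.symm _ _ h1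
      exact hD₂c (SetRel.prodMk_mem_comp h1' h2)
    -- multi-sensitivity applied to V and the preimages of U
    obtain ⟨n, hn⟩ := hM (k + 1)
      (Fin.cons {w | (z, w) ∈ E₃} (fun i : Fin (k + 1) => ((traj f p)^[(i : ℕ)]) ⁻¹' U))
      (fun i => Fin.cases hVo
        (fun i => hUo.preimage ((traj_cont f hf p).iterate _)) i)
      (fun i => Fin.cases ⟨z, hzV⟩
        (fun i => by
          obtain ⟨w, hw⟩ := (hsurj.iterate (i : ℕ)) z
          exact ⟨w, by simp [Set.mem_preimage, hw, hz]⟩) i)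
    have hnbig : k * p < n := by
      by_contra hle
      push_neg at hle
      have h0 := Set.mem_iInter.mp hn 0
      rw [Fin.cons_zero] at h0
      obtain ⟨hn0, u, hu, v, hv, hsep⟩ := h0
      exact hsep (hVpair u hu v hv n hle)
    refine ⟨n - k * p, ?_⟩
    intro j hj
    have hkkp : k ≤ k * p := Nat.le_mul_of_pos_right k hp
    have hjkp : j ≤ k * p := le_trans hj hkkp
    -- decompose the distance to the nearest AP point above
    have hdecomp : (k * p - j) / p * p + (k * p - j) % p = k * p - j := by
      rw [mul_comm]; exact Nat.div_add_mod _ _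
    have hrp : (k * p - j) % p < p := Nat.mod_lt _ hp
    have hik : (k * p - j) / p ≤ k := by
      have h1 : (k * p - j) / p ≤ k * p / p := Nat.div_le_div_right (Nat.sub_le _ _)
      rwa [Nat.mul_div_cancel _ hp] at h1
    set i₀ := (k * p - j) / p with hi₀
    set r := (k * p - j) % p with hr
    set t := n - k * p + j with ht
    have h5 : n - i₀ * p = t + r := by omega
    have h6 : (n - i₀ * p) + i₀ * p = n := by omega
    have hni := Set.mem_iInter.mp hn (Fin.succ ⟨i₀, by omega⟩)
    rw [Fin.cons_succ] at hni
    obtain ⟨hpos', u, hu, v, hv, hsep⟩ := hni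
    have h7 := traj_add_mul f hper i₀ (n - i₀ * p)
    rw [h6] at h7
    refine ⟨by omega, (traj f p)^[i₀] u, hu, (traj f p)^[i₀] v, hv, ?_⟩
    intro hcon
    apply hsep
    have hkey := hD' ⟨⟨t % p, Nat.mod_lt _ hp⟩, ⟨r, by omega⟩⟩ _ _ hcon
    simp only at hkey
    rw [seg_mod f hper] at hkey
    have e1 : ∀ w : X, seg f t r (traj f t w) = traj f (t + r) w :=
      fun w => (congrFun (seg_spec f t r) w).symm
    simp only [e1] at hkey
    rw [← h5] at hkey
    have e2 : ∀ w : X, traj f (n - i₀ * p) ((traj f p)^[i₀] w) = traj f n w :=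
      fun w => (congrFun h7 w).symm
    simp only [e2] at hkey
    exact hkey
end

section
/- Let (X, f_{1,∞}) be a non-autonomous system on a Hausdorff space X. Suppose (x,y) is not an equicontinuity pair and O is a splitting neighborhood of y with respect to x. Then for every neighborhood U of x and every neighborhood V of y, the set {n ∈ ℕ : f_1^n(U) ∩ V ≠ ∅ and f_1^n(U) ⊄ O} is infinite. -/
open Topology Filter Set
open scoped Uniformity

lemma traj_continuous {X : Type*} [TopologicalSpace X] (f : ℕ → X → X)
    (hf : ∀ n, Continuous (f n)) : ∀ n, Continuous (traj f n) := by
  intro n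
  induction n with
  | zero => exact continuous_id
  | succ n ih => exact (hf (n + 1)).comp ih

theorem splitting_set_infinite {X : Type*} [TopologicalSpace X] [T2Space X]
    (f : ℕ → X → X) (hf : ∀ n, Continuous (f n))
    (x y : X) (hne : ¬ EqPair f x y) (O : Set X) (hO : SplittingNbhd f x y O) :
    ∀ U ∈ 𝓝 x, ∀ V ∈ 𝓝 y,
      {n : ℕ | 0 < n ∧ ((traj f n '' U) ∩ V).Nonempty ∧ ¬ traj f n '' U ⊆ O}.Infinite := by
  intro U hU V hV
  obtain ⟨hOy, hsp⟩ := hO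
  -- For every n there are neighborhoods killing time n
  have key : ∀ n : ℕ, ∃ Un ∈ 𝓝 x, ∃ Vn ∈ 𝓝 y,
      (traj f n '' Un) ∩ Vn = ∅ ∨ traj f n '' Un ⊆ O := by
    intro n
    by_cases h : traj f n x = y
    · refine ⟨traj f n ⁻¹' interior O, ?_, univ, univ_mem, Or.inr ?_⟩
      · exact (traj_continuous f hf n).continuousAt.preimage_mem_nhds
          (by rw [h]; exact isOpen_interior.mem_nhds (mem_interior_iff_mem_nhds.mpr hOy))
      · refine (image_preimage_subset _ _).trans interior_subset
    · obtain ⟨W, V', hW, hV', hzW, hyV', hdisj⟩ := t2_separation h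
      refine ⟨traj f n ⁻¹' W, (traj_continuous f hf n).continuousAt.preimage_mem_nhds
        (hW.mem_nhds hzW), V', hV'.mem_nhds hyV', Or.inl ?_⟩
      refine subset_empty_iff.mp ?_
      intro z ⟨hz1, hz2⟩
      obtain ⟨w, hw, rfl⟩ := hz1
      exact hdisj.le_bot ⟨hw, hz2⟩ |>.elim
  choose Un hUn Vn hVn hgood using key
  apply Set.infinite_of_not_bddAbove
  rintro ⟨N, hN⟩
  -- intersect the neighborhoods for n ≤ N with U and V
  set U' : Set X := U ∩ ⋂ n ∈ Finset.range (N + 1), Un n with hU'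
  set V' : Set X := V ∩ ⋂ n ∈ Finset.range (N + 1), Vn n with hV'
  have hU'x : U' ∈ 𝓝 x := inter_mem hU ((Filter.biInter_finset_mem _).mpr fun n _ => hUn n)
  have hV'y : V' ∈ 𝓝 y := inter_mem hV ((Filter.biInter_finset_mem _).mpr fun n _ => hVn n)
  obtain ⟨n, hn0, hne', hnO⟩ := hsp U' hU'x V' hV'y
  have hUsubU' : True := trivial
  have hUsub : U' ⊆ U := inter_subset_left
  have hVsub : V' ⊆ V := inter_subset_left
  have hmem : n ∈ {n : ℕ | 0 < n ∧ ((traj f n '' U) ∩ V).Nonempty ∧ ¬ traj f n '' U ⊆ O} := by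
    obtain ⟨z, hz1, hz2⟩ := hne'
    refine ⟨hn0, ⟨z, image_mono hUsub hz1, hVsub hz2⟩, fun hsub => hnO ?_⟩
    exact (image_mono hUsub).trans hsub
  -- show n > N; for n ≤ N we get a contradiction from hgood
  by_cases hle : n ≤ N
  · have hn' : n ∈ Finset.range (N + 1) := Finset.mem_range.mpr (Nat.lt_succ_of_le hle)
    have hU'' : U' ⊆ Un n := fun z hz => Set.mem_iInter₂.mp hz.2 n hn'
    have hV'' : V' ⊆ Vn n := fun z hz => Set.mem_iInter₂.mp hz.2 n hn'
    rcases hgood n with h | h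
    · obtain ⟨z, hz1, hz2⟩ := hne'
      exact (Set.eq_empty_iff_forall_notMem.mp h z
        ⟨image_mono hU'' hz1, hV'' hz2⟩).elim
    · exact hnO ((image_mono hU'').trans h)
  · exact absurd (hN hmem) hle
end
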